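/- Let n, d be natural numbers, let Φ be a real n×d matrix, let c > 0 be a real number, let v ∈ ℝ^d, and let ε ∈ ℝ^n. Then |(Φ v)ᵀ (Φ Φᵀ + c I)⁻¹ ε| ≤ (1/√c) · √(vᵀ v − (Φ v)ᵀ (Φ Φᵀ + c I)⁻¹ Φ v) · √(εᵀ Φ Φᵀ (Φ Φᵀ + c I)⁻¹ ε). -/

import Mathlib

open Matrix

/-- Cauchy–Schwarz for a real positive semidefinite matrix. -/
lemma psd_cauchy_schwarz {m : ℕ} {S : Matrix (Fin m) (Fin m) ℝ} (hS : S.PosSemidef)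
    (x y : Fin m → ℝ) :
    |x ⬝ᵥ (S *ᵥ y)| ≤ Real.sqrt (x ⬝ᵥ (S *ᵥ x)) * Real.sqrt (y ⬝ᵥ (S *ᵥ y)) := by
  have hSt : Sᵀ = S := by
    have := hS.1
    simpa [Matrix.IsHermitian, conjTranspose_eq_transpose_of_trivial] using this
  have hsym : ∀ a b : Fin m → ℝ, a ⬝ᵥ (S *ᵥ b) = b ⬝ᵥ (S *ᵥ a) := by
    intro a b
    rw [dotProduct_mulVec, dotProduct_comm, ← mulVec_transpose, hSt]
  have hx0 : 0 ≤ x ⬝ᵥ (S *ᵥ x) := by simpa using hS.dotProduct_mulVec_nonneg x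
  have hy0 : 0 ≤ y ⬝ᵥ (S *ᵥ y) := by simpa using hS.dotProduct_mulVec_nonneg y
  have key : (x ⬝ᵥ (S *ᵥ y)) ^ 2 ≤ (x ⬝ᵥ (S *ᵥ x)) * (y ⬝ᵥ (S *ᵥ y)) := by
    have h := discrim_le_zero (a := y ⬝ᵥ (S *ᵥ y)) (b := 2 * (x ⬝ᵥ (S *ᵥ y)))
      (c := x ⬝ᵥ (S *ᵥ x)) ?_
    · rw [discrim] at h; nlinarith
    · intro t
      have h0 : 0 ≤ (x + t • y) ⬝ᵥ (S *ᵥ (x + t • y)) := by simpa using hS.dotProduct_mulVec_nonneg (x + t • y)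
      have expand : (x + t • y) ⬝ᵥ (S *ᵥ (x + t • y)) =
          (y ⬝ᵥ (S *ᵥ y)) * (t * t) + 2 * (x ⬝ᵥ (S *ᵥ y)) * t + x ⬝ᵥ (S *ᵥ x) := by
        simp only [mulVec_add, mulVec_smul, dotProduct_add, add_dotProduct,
          dotProduct_smul, smul_dotProduct, smul_eq_mul, hsym y x]
        ring
      rw [expand] at h0
      linarith
  calc |x ⬝ᵥ (S *ᵥ y)| = Real.sqrt ((x ⬝ᵥ (S *ᵥ y)) ^ 2) := by
        rw [Real.sqrt_sq_eq_abs]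
    _ ≤ Real.sqrt ((x ⬝ᵥ (S *ᵥ x)) * (y ⬝ᵥ (S *ᵥ y))) := Real.sqrt_le_sqrt key
    _ = _ := Real.sqrt_mul hx0 _

theorem lemma3_noise_bound (n d : ℕ) (Φ : Matrix (Fin n) (Fin d) ℝ) (c : ℝ)
    (hc : 0 < c) (v : Fin d → ℝ) (ε : Fin n → ℝ) :
    |(Φ *ᵥ v) ⬝ᵥ ((Φ * Φᵀ + c • (1 : Matrix (Fin n) (Fin n) ℝ))⁻¹ *ᵥ ε)| ≤
      (1 / Real.sqrt c) *
        Real.sqrt (v ⬝ᵥ v -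
          (Φ *ᵥ v) ⬝ᵥ ((Φ * Φᵀ + c • (1 : Matrix (Fin n) (Fin n) ℝ))⁻¹ *ᵥ (Φ *ᵥ v))) *
        Real.sqrt (ε ⬝ᵥ ((Φ * Φᵀ * (Φ * Φᵀ + c • (1 : Matrix (Fin n) (Fin n) ℝ))⁻¹) *ᵥ ε)) := by
  set A : Matrix (Fin n) (Fin n) ℝ := Φ * Φᵀ + c • 1 with hAdef
  set B : Matrix (Fin d) (Fin d) ℝ := Φᵀ * Φ + c • 1 with hBdef
  have hc1 : ∀ (m : ℕ), (c • (1 : Matrix (Fin m) (Fin m) ℝ)).PosDef := by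
    intro m
    refine Matrix.PosDef.of_dotProduct_mulVec_pos ?_ ?_
    · simp [Matrix.IsHermitian, conjTranspose_smul, conjTranspose_one]
    · intro x hx
      simp only [star_trivial, smul_mulVec, one_mulVec, dotProduct_smul, smul_eq_mul]
      have hxx : 0 < x ⬝ᵥ x := by
        have hne : x ⬝ᵥ x ≠ 0 := fun h => hx (dotProduct_self_eq_zero.1 h)
        have hge : 0 ≤ x ⬝ᵥ x := Finset.sum_nonneg fun i _ => mul_self_nonneg (x i)
        exact lt_of_le_of_ne hge (Ne.symm hne)
      exact mul_pos hc hxx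
  have hΦΦ : (Φ * Φᵀ).PosSemidef := by
    have := posSemidef_self_mul_conjTranspose Φ
    simpa [conjTranspose_eq_transpose_of_trivial] using this
  have hΦΦ' : (Φᵀ * Φ).PosSemidef := by
    have := posSemidef_conjTranspose_mul_self Φ
    simpa [conjTranspose_eq_transpose_of_trivial] using this
  have hA : A.PosDef := Matrix.PosDef.posSemidef_add hΦΦ (hc1 n)
  have hB : B.PosDef := Matrix.PosDef.posSemidef_add hΦΦ' (hc1 d)
  have hAinv : A * A⁻¹ = 1 := mul_nonsing_inv A (isUnit_iff_isUnit_det A |>.1 hA.isUnit)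
  have hBinv' : B⁻¹ * B = 1 := nonsing_inv_mul B (isUnit_iff_isUnit_det B |>.1 hB.isUnit)
  have h1 : Φᵀ * A = B * Φᵀ := by
    rw [hAdef, hBdef]
    simp only [Matrix.mul_add, Matrix.add_mul, Matrix.mul_smul, Matrix.smul_mul,
      Matrix.mul_one, Matrix.one_mul, Matrix.mul_assoc]
  have h2 : Φᵀ * A⁻¹ = B⁻¹ * Φᵀ := by
    calc Φᵀ * A⁻¹ = B⁻¹ * (B * Φᵀ) * A⁻¹ := by
          rw [← Matrix.mul_assoc, hBinv', Matrix.one_mul]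
      _ = B⁻¹ * (Φᵀ * A) * A⁻¹ := by rw [h1]
      _ = B⁻¹ * Φᵀ := by
          rw [Matrix.mul_assoc, Matrix.mul_assoc, hAinv, Matrix.mul_one]
  have h3 : Φᵀ * A⁻¹ * Φ = 1 - c • B⁻¹ := by
    rw [h2, Matrix.mul_assoc]
    have hB' : Φᵀ * Φ = B - c • 1 := by rw [hBdef]; abel
    rw [hB', Matrix.mul_sub, hBinv', Matrix.mul_smul, Matrix.mul_one]
  -- dot product rewrites
  have flipΦ : ∀ (u : Fin d → ℝ) (w : Fin n → ℝ),
      (Φ *ᵥ u) ⬝ᵥ w = u ⬝ᵥ (Φᵀ *ᵥ w) := by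
    intro u w
    rw [← vecMul_transpose, dotProduct_mulVec]
  have hLHS : (Φ *ᵥ v) ⬝ᵥ (A⁻¹ *ᵥ ε) = v ⬝ᵥ (B⁻¹ *ᵥ (Φᵀ *ᵥ ε)) := by
    rw [flipΦ, mulVec_mulVec, h2, ← mulVec_mulVec]
  have hMid : v ⬝ᵥ v - (Φ *ᵥ v) ⬝ᵥ (A⁻¹ *ᵥ (Φ *ᵥ v)) = c * (v ⬝ᵥ (B⁻¹ *ᵥ v)) := by
    rw [flipΦ, mulVec_mulVec, mulVec_mulVec, h3, sub_mulVec, one_mulVec,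
      dotProduct_sub, smul_mulVec, dotProduct_smul, smul_eq_mul]
    ring
  have hR : ε ⬝ᵥ ((Φ * Φᵀ * A⁻¹) *ᵥ ε) = (Φᵀ *ᵥ ε) ⬝ᵥ (B⁻¹ *ᵥ (Φᵀ *ᵥ ε)) := by
    have : Φ * Φᵀ * A⁻¹ = Φ * (B⁻¹ * Φᵀ) := by
      rw [← h2, ← Matrix.mul_assoc]
    rw [this, ← mulVec_mulVec]
    rw [dotProduct_mulVec ε Φ, ← mulVec_transpose, dotProduct_mulVec, dotProduct_mulVec,
      ← vecMul_vecMul, ← dotProduct_mulVec]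
  rw [hLHS, hMid, hR]
  have hcs := psd_cauchy_schwarz (hB.inv.posSemidef) v (Φᵀ *ᵥ ε)
  have hv0 : 0 ≤ v ⬝ᵥ (B⁻¹ *ᵥ v) := by simpa using hB.inv.posSemidef.dotProduct_mulVec_nonneg v
  have hsc : Real.sqrt (c * (v ⬝ᵥ (B⁻¹ *ᵥ v))) =
      Real.sqrt c * Real.sqrt (v ⬝ᵥ (B⁻¹ *ᵥ v)) := Real.sqrt_mul hc.le _
  rw [hsc]
  have hsc0 : Real.sqrt c ≠ 0 := (Real.sqrt_pos.2 hc).ne'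
  calc |v ⬝ᵥ (B⁻¹ *ᵥ (Φᵀ *ᵥ ε))|
      ≤ Real.sqrt (v ⬝ᵥ (B⁻¹ *ᵥ v)) * Real.sqrt ((Φᵀ *ᵥ ε) ⬝ᵥ (B⁻¹ *ᵥ (Φᵀ *ᵥ ε))) := hcs
    _ = 1 / Real.sqrt c * (Real.sqrt c * Real.sqrt (v ⬝ᵥ (B⁻¹ *ᵥ v))) *
        Real.sqrt ((Φᵀ *ᵥ ε) ⬝ᵥ (B⁻¹ *ᵥ (Φᵀ *ᵥ ε))) := by
        field_simp
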